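/- Fix a > b > 0. For each N ∈ ℕ, the function Ψ_{N}(ρ,φ) = (r̃ cos φ · L_N¹(r̃²) e^{−r̃²/2}, r̃ sin φ · L_N¹(r̃²) e^{−r̃²/2}) with r̃ = (a+b)^{1/4} ρ is an eigenfunction of ℍ₂ with eigenvalue (2N+2)√(a+b). -/

import Mathlib

open MeasureTheory

/-- The associated Laguerre polynomial `L_N¹(x) = Σ_{j=0}^N (-1)^j C(N+1, N-j) x^j / j!`. -/
noncomputable def lagOne (N : ℕ) (x : ℝ) : ℝ :=
  ∑ j ∈ Finset.range (N + 1),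
    (-1 : ℝ) ^ j * (Nat.choose (N + 1) (N - j) : ℝ) * x ^ j / (Nat.factorial j : ℝ)

/-- The (classical) Laplacian of a real-valued function on `ℝ²`. -/
noncomputable def lap2R (f : ℝ × ℝ → ℝ) (p : ℝ × ℝ) : ℝ :=
  deriv (fun s => deriv (fun u => f (u, p.2)) s) p.1 +
    deriv (fun s => deriv (fun u => f (p.1, u)) s) p.2

section auxLemmas

open Polynomial Filter

/-- Polynomial version of `lagOne`. -/
noncomputable def lagPoly (N : ℕ) : Polynomial ℝ :=
  ∑ j ∈ Finset.range (N + 1),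
    Polynomial.C ((-1 : ℝ) ^ j * (Nat.choose (N + 1) (N - j) : ℝ) / (Nat.factorial j : ℝ)) *
      Polynomial.X ^ j

lemma lagPoly_eval (N : ℕ) (x : ℝ) : (lagPoly N).eval x = lagOne N x := by
  rw [lagPoly, lagOne, Polynomial.eval_finset_sum]
  exact Finset.sum_congr rfl fun j _ => by simp; ring

lemma lagPoly_coeff (N k : ℕ) :
    (lagPoly N).coeff k = if k < N + 1 then
      (-1 : ℝ) ^ k * (Nat.choose (N + 1) (N - k) : ℝ) / (Nat.factorial k : ℝ) else 0 := by
  rw [lagPoly, Polynomial.finset_sum_coeff]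
  simp only [Polynomial.coeff_C_mul, Polynomial.coeff_X_pow, mul_ite, mul_one, mul_zero]
  rw [show (∑ j ∈ Finset.range (N+1), if k = j then ((-1:ℝ)^j * (Nat.choose (N+1) (N-j) : ℝ) / (Nat.factorial j : ℝ)) else 0) = if k ∈ Finset.range (N+1) then ((-1:ℝ)^k * (Nat.choose (N+1) (N-k) : ℝ) / (Nat.factorial k : ℝ)) else 0 from Finset.sum_ite_eq _ k _]
  simp [Finset.mem_range]

lemma lagPoly_rec (N j : ℕ) :
    ((j:ℝ)+1) * ((j:ℝ)+2) * (lagPoly N).coeff (j+1) + ((N:ℝ) - j) * (lagPoly N).coeff j = 0 := by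
  rcases lt_trichotomy j N with hj | rfl | hj
  · rw [lagPoly_coeff, lagPoly_coeff, if_pos (by omega), if_pos (by omega)]
    have key : Nat.choose (N+1) (j+2) * (j+2) = Nat.choose (N+1) (j+1) * (N - j) := by
      have h := Nat.choose_succ_right_eq (N+1) (j+1)
      rwa [show N+1-(j+1) = N - j from by omega] at h
    have h1 : N - (j+1) = (N+1) - (j+2) := by omega
    have h2 : N - j = (N+1) - (j+1) := by omega
    rw [h1, Nat.choose_symm (by omega), h2, Nat.choose_symm (by omega)]
    have hNj : ((N:ℝ) - j) = ((N - j : ℕ) : ℝ) := by rw [Nat.cast_sub (by omega)]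
    have hkey : (Nat.choose (N+1) (j+2) : ℝ) * ((j:ℝ)+2) = (Nat.choose (N+1) (j+1) : ℝ) * ((N-j:ℕ):ℝ) := by
      exact_mod_cast congrArg (Nat.cast : ℕ → ℝ) key
    have hfac : (Nat.factorial (j+1) : ℝ) = ((j:ℝ)+1) * (Nat.factorial j : ℝ) := by
      rw [Nat.factorial_succ]; push_cast; ring
    rw [hNj, hfac, pow_succ]
    have hfj : (Nat.factorial j : ℝ) ≠ 0 := Nat.cast_ne_zero.2 (Nat.factorial_ne_zero j)
    have hj1 : ((j:ℝ)+1) ≠ 0 := by positivity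
    field_simp
    linear_combination (-(-1:ℝ)^j) * hkey
  · rw [lagPoly_coeff, lagPoly_coeff, if_neg (by omega), if_pos (by omega)]
    simp
  · rw [lagPoly_coeff, lagPoly_coeff, if_neg (by omega), if_neg (by omega)]
    simp

lemma lagPoly_ode (N : ℕ) :
    X * derivative (derivative (lagPoly N)) + (C (2:ℝ) - X) * derivative (lagPoly N)
      + C (N:ℝ) * lagPoly N = 0 := by
  apply Polynomial.ext; intro k
  cases k with
  | zero =>
    simp only [coeff_add, mul_coeff_zero, coeff_X_zero, zero_mul, sub_mul, coeff_sub,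
      coeff_C_mul, coeff_derivative, coeff_zero, coeff_C_zero]
    have := lagPoly_rec N 0
    push_cast at this ⊢
    linarith
  | succ m =>
    simp only [coeff_add, sub_mul, coeff_sub, coeff_X_mul, coeff_C_mul, coeff_derivative,
      coeff_zero]
    have := lagPoly_rec N (m+1)
    push_cast at this ⊢
    linarith [this]

lemma lagPoly_ode_eval (N : ℕ) (t : ℝ) :
    t * (derivative (derivative (lagPoly N))).eval t + (2 - t) * (derivative (lagPoly N)).eval t
      + (N:ℝ) * (lagPoly N).eval t = 0 := by
  have := congrArg (Polynomial.eval t) (lagPoly_ode N)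
  simpa using this

/-- `Gfun w A s = A(ws) e^{-ws/2}`. -/
noncomputable def Gfun (w : ℝ) (A : Polynomial ℝ) (s : ℝ) : ℝ :=
  A.eval (w * s) * Real.exp (-(w * s) / 2)

/-- The operator such that `(Gfun w A)' = Gfun w (Dop w A)`. -/
noncomputable def Dop (w : ℝ) (A : Polynomial ℝ) : Polynomial ℝ :=
  w • derivative A - C (w / 2) * A

lemma hasDerivAt_G (w : ℝ) (A : Polynomial ℝ) (s : ℝ) :
    HasDerivAt (Gfun w A) (Gfun w (Dop w A) s) s := by
  have hlin : HasDerivAt (fun s : ℝ => w * s) w s := by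
    simpa using (hasDerivAt_id s).const_mul w
  have h1 : HasDerivAt (fun s : ℝ => A.eval (w * s)) ((derivative A).eval (w * s) * w) s :=
    (A.hasDerivAt (w * s)).comp s hlin
  have hin : HasDerivAt (fun s : ℝ => -(w * s) / 2) (-w / 2) s := by
    simpa using (hlin.neg.div_const 2)
  have h2 : HasDerivAt (fun s : ℝ => Real.exp (-(w * s) / 2))
      (Real.exp (-(w * s) / 2) * (-w / 2)) s := hin.exp
  have := h1.mul h2
  refine this.congr_deriv ?_
  simp [Gfun, Dop, Polynomial.eval_smul, smul_eq_mul]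
  ring

lemma hasDerivAt_G_sq_add (w k : ℝ) (A : Polynomial ℝ) (x : ℝ) :
    HasDerivAt (fun u => Gfun w A (u ^ 2 + k)) (Gfun w (Dop w A) (x ^ 2 + k) * (2 * x)) x := by
  have hin : HasDerivAt (fun u : ℝ => u ^ 2 + k) (2 * x) x := by
    simpa using (hasDerivAt_pow 2 x).add_const k
  exact (hasDerivAt_G w A (x ^ 2 + k)).comp x hin

lemma hasDerivAt_G_add_sq (w k : ℝ) (A : Polynomial ℝ) (y : ℝ) :
    HasDerivAt (fun u => Gfun w A (k + u ^ 2)) (Gfun w (Dop w A) (k + y ^ 2) * (2 * y)) y := by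
  have hin : HasDerivAt (fun u : ℝ => k + u ^ 2) (2 * y) y := by
    simpa using ((hasDerivAt_pow 2 y).const_add k)
  exact (hasDerivAt_G w A (k + y ^ 2)).comp y hin

lemma d1 (w c k : ℝ) (A : Polynomial ℝ) (x : ℝ) :
    HasDerivAt (fun u => (c * u) * Gfun w A (u ^ 2 + k))
      (c * Gfun w A (x ^ 2 + k) + 2 * c * x ^ 2 * Gfun w (Dop w A) (x ^ 2 + k)) x := by
  have h1 : HasDerivAt (fun u : ℝ => c * u) c x := by
    simpa using (hasDerivAt_id x).const_mul c
  have := h1.mul (hasDerivAt_G_sq_add w k A x)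
  refine this.congr_deriv ?_
  ring

lemma d2 (w c k : ℝ) (A : Polynomial ℝ) (x : ℝ) :
    HasDerivAt (fun u => c * Gfun w A (u ^ 2 + k) + 2 * c * u ^ 2 * Gfun w (Dop w A) (u ^ 2 + k))
      (6 * c * x * Gfun w (Dop w A) (x ^ 2 + k)
        + 4 * c * x ^ 3 * Gfun w (Dop w (Dop w A)) (x ^ 2 + k)) x := by
  have h1 := (hasDerivAt_G_sq_add w k A x).const_mul c
  have h2a : HasDerivAt (fun u : ℝ => 2 * c * u ^ 2) (2 * c * (2 * x)) x := by
    have := (hasDerivAt_pow 2 x).const_mul (2 * c)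
    simpa [mul_assoc] using this
  have h2 := h2a.mul (hasDerivAt_G_sq_add w k (Dop w A) x)
  have := h1.add h2
  refine this.congr_deriv ?_
  ring

lemma dy1 (w m k : ℝ) (A : Polynomial ℝ) (y : ℝ) :
    HasDerivAt (fun u => m * Gfun w A (k + u ^ 2))
      (m * (Gfun w (Dop w A) (k + y ^ 2) * (2 * y))) y :=
  (hasDerivAt_G_add_sq w k A y).const_mul m

lemma dy2 (w m k : ℝ) (A : Polynomial ℝ) (y : ℝ) :
    HasDerivAt (fun u => m * (Gfun w (Dop w A) (k + u ^ 2) * (2 * u)))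
      (m * (2 * Gfun w (Dop w A) (k + y ^ 2)
        + 4 * y ^ 2 * Gfun w (Dop w (Dop w A)) (k + y ^ 2))) y := by
  have h1 := (hasDerivAt_G_add_sq w k (Dop w A) y).mul
    (by simpa using (hasDerivAt_id y).const_mul (2:ℝ) :
      HasDerivAt (fun u : ℝ => 2 * u) 2 y)
  have := h1.const_mul m
  refine this.congr_deriv ?_
  ring

/-- Laplacian of `(c x) G(x²+y²)`. -/
lemma lap_aux (w c : ℝ) (P : Polynomial ℝ) (p : ℝ × ℝ) :
    lap2R (fun q => (c * q.1) * Gfun w P (q.1 ^ 2 + q.2 ^ 2)) p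
      = 8 * c * p.1 * Gfun w (Dop w P) (p.1 ^ 2 + p.2 ^ 2)
        + 4 * c * p.1 * (p.1 ^ 2 + p.2 ^ 2) * Gfun w (Dop w (Dop w P)) (p.1 ^ 2 + p.2 ^ 2) := by
  obtain ⟨x, y⟩ := p
  have hx1 : (deriv fun u => (c * u) * Gfun w P (u ^ 2 + y ^ 2))
      = fun x => c * Gfun w P (x ^ 2 + y ^ 2) + 2 * c * x ^ 2 * Gfun w (Dop w P) (x ^ 2 + y ^ 2) :=
    funext fun x => (d1 w c (y ^ 2) P x).deriv
  have hy1 : (deriv fun u => (c * x) * Gfun w P (x ^ 2 + u ^ 2))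
      = fun y => (c * x) * (Gfun w (Dop w P) (x ^ 2 + y ^ 2) * (2 * y)) :=
    funext fun y => (dy1 w (c * x) (x ^ 2) P y).deriv
  show deriv (fun s => deriv (fun u => (c * u) * Gfun w P (u ^ 2 + y ^ 2)) s) x
      + deriv (fun s => deriv (fun u => (c * x) * Gfun w P (x ^ 2 + u ^ 2)) s) y = _
  rw [hx1, hy1, (d2 w c (y ^ 2) P x).deriv, (dy2 w (c * x) (x ^ 2) P y).deriv]
  ring

lemma lap2R_swap (h : ℝ × ℝ → ℝ) (p : ℝ × ℝ) :
    lap2R (fun q => h (q.2, q.1)) p = lap2R h (p.2, p.1) := by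
  simp only [lap2R]
  exact add_comm _ _

lemma exists_bound_of_tendsto (h : ℝ → ℝ) (hc : Continuous h)
    (ht : Tendsto h atTop (nhds 0)) : ∃ C : ℝ, ∀ s, 0 ≤ s → h s ≤ C := by
  have h1 : ∀ᶠ s in atTop, h s < 1 := ht.eventually (gt_mem_nhds one_pos)
  obtain ⟨M, hM⟩ := eventually_atTop.1 h1
  obtain ⟨C₀, hC₀⟩ := (isCompact_Icc (a := (0:ℝ)) (b := M)).exists_bound_of_continuousOn
    hc.continuousOn
  refine ⟨max C₀ 1, fun s hs => ?_⟩
  rcases le_total s M with h' | h'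
  · calc h s ≤ |h s| := le_abs_self _
      _ = ‖h s‖ := (Real.norm_eq_abs _).symm
      _ ≤ C₀ := hC₀ s ⟨hs, h'⟩
      _ ≤ max C₀ 1 := le_max_left _ _
  · exact le_trans (le_of_lt (hM s h')) (le_max_right _ _)

lemma poly_exp_bound (A : Polynomial ℝ) (k : ℝ) (hk : 0 < k) :
    ∃ C : ℝ, ∀ s, 0 ≤ s → A.eval s * Real.exp (-(k * s)) ≤ C := by
  apply exists_bound_of_tendsto
  · exact (A.continuous_aeval.mul ((Real.continuous_exp.comp ((continuous_const.mul continuous_id).neg))))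
  · have h2 : Tendsto (fun s : ℝ => k * s) atTop atTop :=
      Tendsto.const_mul_atTop hk tendsto_id
    have h1 := (Polynomial.tendsto_div_exp_atTop (A.comp (C k⁻¹ * X))).comp h2
    have heq : (fun s : ℝ => (A.comp (C k⁻¹ * X)).eval (k * s) / Real.exp (k * s))
        = fun s : ℝ => A.eval s * Real.exp (-(k * s)) := by
      funext s
      rw [Polynomial.eval_comp]
      simp only [Polynomial.eval_mul, Polynomial.eval_C, Polynomial.eval_X]
      rw [show k⁻¹ * (k * s) = s from by field_simp, Real.exp_neg, div_eq_mul_inv]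
    rw [Function.comp_def] at h1; rwa [heq] at h1

/-- Square-integrability of functions dominated by `cc² s P(ws)² e^{-ws}`. -/
lemma mem_aux (w cc : ℝ) (hw : 0 < w) (P : Polynomial ℝ) (h : ℝ × ℝ → ℝ)
    (hcont : Continuous h)
    (hbd : ∀ p : ℝ × ℝ, (h p) ^ 2 ≤ cc ^ 2 * (p.1 ^ 2 + p.2 ^ 2)
      * (P.eval (w * (p.1 ^ 2 + p.2 ^ 2))) ^ 2 * Real.exp (-(w * (p.1 ^ 2 + p.2 ^ 2)))) :
    MemLp h 2 (volume : Measure (ℝ × ℝ)) := by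
  have hw2 : 0 < w / 2 := half_pos hw
  obtain ⟨C, hC⟩ := poly_exp_bound (C (cc ^ 2) * X * (P.comp (C w * X)) ^ 2) (w / 2) hw2
  have hCval : ∀ s : ℝ, 0 ≤ s →
      cc ^ 2 * s * (P.eval (w * s)) ^ 2 * Real.exp (-(w / 2 * s)) ≤ C := by
    intro s hs
    have := hC s hs
    simpa [Polynomial.eval_comp, mul_assoc] using this
  have hint : Integrable (fun p : ℝ × ℝ =>
      C * (Real.exp (-(w / 2) * p.1 ^ 2) * Real.exp (-(w / 2) * p.2 ^ 2)))
      (volume : Measure (ℝ × ℝ)) := by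
    rw [MeasureTheory.Measure.volume_eq_prod]
    have h1 : Integrable (fun x : ℝ => C * Real.exp (-(w / 2) * x ^ 2)) volume :=
      (integrable_exp_neg_mul_sq hw2).const_mul C
    have h2 : Integrable (fun x : ℝ => Real.exp (-(w / 2) * x ^ 2)) volume :=
      integrable_exp_neg_mul_sq hw2
    have := h1.mul_prod h2
    simpa [mul_assoc] using this
  have hsqint : Integrable (fun p : ℝ × ℝ => (h p) ^ 2) (volume : Measure (ℝ × ℝ)) := by
    refine hint.mono' ((hcont.pow 2).aestronglyMeasurable) (ae_of_all _ fun p => ?_)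
    have hs0 : (0:ℝ) ≤ p.1 ^ 2 + p.2 ^ 2 := by positivity
    rw [Real.norm_eq_abs, abs_of_nonneg (sq_nonneg _)]
    calc (h p) ^ 2 ≤ cc ^ 2 * (p.1 ^ 2 + p.2 ^ 2)
          * (P.eval (w * (p.1 ^ 2 + p.2 ^ 2))) ^ 2
          * Real.exp (-(w * (p.1 ^ 2 + p.2 ^ 2))) := hbd p
      _ = (cc ^ 2 * (p.1 ^ 2 + p.2 ^ 2) * (P.eval (w * (p.1 ^ 2 + p.2 ^ 2))) ^ 2
            * Real.exp (-(w / 2 * (p.1 ^ 2 + p.2 ^ 2))))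
          * Real.exp (-(w / 2 * (p.1 ^ 2 + p.2 ^ 2))) := by
        rw [show -(w * (p.1 ^ 2 + p.2 ^ 2)) = -(w / 2 * (p.1 ^ 2 + p.2 ^ 2))
            + -(w / 2 * (p.1 ^ 2 + p.2 ^ 2)) from by ring, Real.exp_add]
        ring
      _ ≤ C * Real.exp (-(w / 2 * (p.1 ^ 2 + p.2 ^ 2))) :=
        mul_le_mul_of_nonneg_right (hCval _ hs0) (Real.exp_nonneg _)
      _ = C * (Real.exp (-(w / 2) * p.1 ^ 2) * Real.exp (-(w / 2) * p.2 ^ 2)) := by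
        rw [show -(w / 2 * (p.1 ^ 2 + p.2 ^ 2)) = -(w / 2) * p.1 ^ 2 + -(w / 2) * p.2 ^ 2
            from by ring, Real.exp_add]
  exact (memLp_two_iff_integrable_sq hcont.aestronglyMeasurable).2 hsqint

end auxLemmas

/-- The `l = 0` eigenfunctions of the Renner--Teller leading order Hamiltonian `ℍ₂`
built from the `√(a+b)` oscillator: for `a > b > 0` the function
`Ψ_N(ρ,φ) = (r̃ cos φ · L_N¹(r̃²) e^{−r̃²/2}, r̃ sin φ · L_N¹(r̃²) e^{−r̃²/2})`,
`r̃ = (a+b)^{1/4} ρ`, is an eigenfunction of `ℍ₂` with eigenvalue `(2N+2)√(a+b)`. -/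
theorem renner_l0_plus_eigenfunctions (a b : ℝ) (hb0 : 0 < b) (hab : b < a) (N : ℕ)
    (F f g : ℝ × ℝ → ℝ)
    (hF : F = fun p : ℝ × ℝ =>
      lagOne N (Real.sqrt (a + b) * (p.1 ^ 2 + p.2 ^ 2)) *
        Real.exp (-(Real.sqrt (a + b) * (p.1 ^ 2 + p.2 ^ 2)) / 2))
    (hf : f = fun p : ℝ × ℝ => ((a + b) ^ ((1 : ℝ) / 4) * p.1) * F p)
    (hg : g = fun p : ℝ × ℝ => ((a + b) ^ ((1 : ℝ) / 4) * p.2) * F p) :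
    -- polar form: the components are `r̃ cos φ · L_N¹(r̃²) e^{−r̃²/2}` and
    -- `r̃ sin φ · L_N¹(r̃²) e^{−r̃²/2}` with `r̃ = (a+b)^{1/4} ρ`
    (∀ ρ : ℝ, 0 ≤ ρ → ∀ φ : ℝ,
      f (ρ * Real.cos φ, ρ * Real.sin φ) =
        ((a + b) ^ ((1 : ℝ) / 4) * ρ) * Real.cos φ *
          (lagOne N (((a + b) ^ ((1 : ℝ) / 4) * ρ) ^ 2) *
            Real.exp (-(((a + b) ^ ((1 : ℝ) / 4) * ρ) ^ 2) / 2)) ∧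
      g (ρ * Real.cos φ, ρ * Real.sin φ) =
        ((a + b) ^ ((1 : ℝ) / 4) * ρ) * Real.sin φ *
          (lagOne N (((a + b) ^ ((1 : ℝ) / 4) * ρ) ^ 2) *
            Real.exp (-(((a + b) ^ ((1 : ℝ) / 4) * ρ) ^ 2) / 2))) ∧
    -- the pair is square integrable
    MemLp f 2 (volume : Measure (ℝ × ℝ)) ∧ MemLp g 2 (volume : Measure (ℝ × ℝ)) ∧
    -- and satisfies the eigenvalue equation `ℍ₂ Ψ = (2N+2)√(a+b) Ψ` pointwise
    ∀ p : ℝ × ℝ,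
      (-(1 / 2) * lap2R f p +
          ((a + b) / 2 * p.1 ^ 2 + (a - b) / 2 * p.2 ^ 2) * f p + b * p.1 * p.2 * g p =
        (2 * N + 2) * Real.sqrt (a + b) * f p) ∧
      (-(1 / 2) * lap2R g p + b * p.1 * p.2 * f p +
          ((a - b) / 2 * p.1 ^ 2 + (a + b) / 2 * p.2 ^ 2) * g p =
        (2 * N + 2) * Real.sqrt (a + b) * g p) := by
  have hab0 : (0:ℝ) < a + b := by linarith
  set w : ℝ := Real.sqrt (a + b) with hwdef
  set c : ℝ := (a + b) ^ ((1 : ℝ) / 4) with hcdef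
  have hw : 0 < w := Real.sqrt_pos.2 hab0
  have hw2 : w ^ 2 = a + b := Real.sq_sqrt hab0.le
  have hc2 : c ^ 2 = w := by
    rw [hwdef, Real.sqrt_eq_rpow, hcdef,
      show ((a+b) ^ ((1:ℝ)/4)) ^ 2 = ((a+b) ^ ((1:ℝ)/4)) ^ ((2:ℕ):ℝ) from
        (Real.rpow_natCast _ 2).symm, ← Real.rpow_mul hab0.le]
    norm_num
  set P : Polynomial ℝ := lagPoly N with hPdef
  have hF' : F = fun p : ℝ × ℝ => Gfun w P (p.1 ^ 2 + p.2 ^ 2) := by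
    funext p; rw [hF]; simp [Gfun, hPdef, lagPoly_eval]
  have hf' : f = fun p : ℝ × ℝ => (c * p.1) * Gfun w P (p.1 ^ 2 + p.2 ^ 2) := by
    rw [hf, hF']
  have hg' : g = fun p : ℝ × ℝ => (c * p.2) * Gfun w P (p.1 ^ 2 + p.2 ^ 2) := by
    rw [hg, hF']
  have hg2 : g = fun q : ℝ × ℝ =>
      (fun q : ℝ × ℝ => (c * q.1) * Gfun w P (q.1 ^ 2 + q.2 ^ 2)) (q.2, q.1) := by
    funext q
    rw [hg']
    simp only
    rw [add_comm (q.1 ^ 2) (q.2 ^ 2)]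
  -- the expansions of Dop evaluations
  have hQe : ∀ u : ℝ, (Dop w P).eval u
      = w * (Polynomial.derivative P).eval u - w / 2 * P.eval u := by
    intro u; simp [Dop, smul_eq_mul]
  have hRe : ∀ u : ℝ, (Dop w (Dop w P)).eval u
      = w ^ 2 * (Polynomial.derivative (Polynomial.derivative P)).eval u
        - w ^ 2 * (Polynomial.derivative P).eval u + w ^ 2 / 4 * P.eval u := by
    intro u
    simp [Dop, Polynomial.derivative_sub, Polynomial.derivative_smul,
      Polynomial.derivative_C_mul, smul_eq_mul]
    ring
  refine ⟨?_, ?_, ?_, ?_⟩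
  · -- polar form
    intro ρ hρ φ
    have hpy := Real.sin_sq_add_cos_sq φ
    have harg : (ρ * Real.cos φ) ^ 2 + (ρ * Real.sin φ) ^ 2 = ρ ^ 2 := by
      linear_combination ρ ^ 2 * hpy
    have harg2 : w * ρ ^ 2 = (c * ρ) ^ 2 := by
      linear_combination ρ ^ 2 * hc2.symm
    constructor
    · rw [hf']
      simp only [harg, Gfun]
      rw [harg2, hPdef, lagPoly_eval]
      ring
    · rw [hg']
      simp only [harg, Gfun]
      rw [harg2, hPdef, lagPoly_eval]
      ring
  · -- MemLp f
    rw [hf']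
    refine mem_aux w c hw P _ ?_ ?_
    · exact (continuous_const.mul continuous_fst).mul
        ((P.continuous_aeval.comp (by fun_prop)).mul
          (Real.continuous_exp.comp (by fun_prop)))
    · intro p
      simp only [Gfun]
      have hx : p.1 ^ 2 ≤ p.1 ^ 2 + p.2 ^ 2 := by nlinarith [sq_nonneg p.2]
      have heq : Real.exp (-(w * (p.1 ^ 2 + p.2 ^ 2)) / 2) ^ 2
          = Real.exp (-(w * (p.1 ^ 2 + p.2 ^ 2))) := by
        rw [sq, ← Real.exp_add]; congr 1; ring
      have key := mul_le_mul_of_nonneg_left hx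
        (show (0:ℝ) ≤ c ^ 2 * (P.eval (w * (p.1 ^ 2 + p.2 ^ 2))) ^ 2
            * Real.exp (-(w * (p.1 ^ 2 + p.2 ^ 2))) from by positivity)
      calc (c * p.1 * (P.eval (w * (p.1 ^ 2 + p.2 ^ 2))
              * Real.exp (-(w * (p.1 ^ 2 + p.2 ^ 2)) / 2))) ^ 2
          = c ^ 2 * (P.eval (w * (p.1 ^ 2 + p.2 ^ 2))) ^ 2
              * Real.exp (-(w * (p.1 ^ 2 + p.2 ^ 2))) * p.1 ^ 2 := by rw [← heq]; ring
        _ ≤ c ^ 2 * (P.eval (w * (p.1 ^ 2 + p.2 ^ 2))) ^ 2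
              * Real.exp (-(w * (p.1 ^ 2 + p.2 ^ 2))) * (p.1 ^ 2 + p.2 ^ 2) := key
        _ = c ^ 2 * (p.1 ^ 2 + p.2 ^ 2) * (P.eval (w * (p.1 ^ 2 + p.2 ^ 2))) ^ 2
              * Real.exp (-(w * (p.1 ^ 2 + p.2 ^ 2))) := by ring
  · -- MemLp g
    rw [hg']
    refine mem_aux w c hw P _ ?_ ?_
    · exact (continuous_const.mul continuous_snd).mul
        ((P.continuous_aeval.comp (by fun_prop)).mul
          (Real.continuous_exp.comp (by fun_prop)))
    · intro p
      simp only [Gfun]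
      have hx : p.2 ^ 2 ≤ p.1 ^ 2 + p.2 ^ 2 := by nlinarith [sq_nonneg p.1]
      have heq : Real.exp (-(w * (p.1 ^ 2 + p.2 ^ 2)) / 2) ^ 2
          = Real.exp (-(w * (p.1 ^ 2 + p.2 ^ 2))) := by
        rw [sq, ← Real.exp_add]; congr 1; ring
      have key := mul_le_mul_of_nonneg_left hx
        (show (0:ℝ) ≤ c ^ 2 * (P.eval (w * (p.1 ^ 2 + p.2 ^ 2))) ^ 2
            * Real.exp (-(w * (p.1 ^ 2 + p.2 ^ 2))) from by positivity)
      calc (c * p.2 * (P.eval (w * (p.1 ^ 2 + p.2 ^ 2))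
              * Real.exp (-(w * (p.1 ^ 2 + p.2 ^ 2)) / 2))) ^ 2
          = c ^ 2 * (P.eval (w * (p.1 ^ 2 + p.2 ^ 2))) ^ 2
              * Real.exp (-(w * (p.1 ^ 2 + p.2 ^ 2))) * p.2 ^ 2 := by rw [← heq]; ring
        _ ≤ c ^ 2 * (P.eval (w * (p.1 ^ 2 + p.2 ^ 2))) ^ 2
              * Real.exp (-(w * (p.1 ^ 2 + p.2 ^ 2))) * (p.1 ^ 2 + p.2 ^ 2) := key
        _ = c ^ 2 * (p.1 ^ 2 + p.2 ^ 2) * (P.eval (w * (p.1 ^ 2 + p.2 ^ 2))) ^ 2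
              * Real.exp (-(w * (p.1 ^ 2 + p.2 ^ 2))) := by ring
  · -- the eigenvalue equation
    intro p
    have hode := lagPoly_ode_eval N (w * (p.1 ^ 2 + p.2 ^ 2))
    rw [← hPdef] at hode
    have hlapf : lap2R f p
        = 8 * c * p.1 * Gfun w (Dop w P) (p.1 ^ 2 + p.2 ^ 2)
          + 4 * c * p.1 * (p.1 ^ 2 + p.2 ^ 2) * Gfun w (Dop w (Dop w P)) (p.1 ^ 2 + p.2 ^ 2) := by
      rw [hf']; exact lap_aux w c P p
    have hlapg : lap2R g p
        = 8 * c * p.2 * Gfun w (Dop w P) (p.2 ^ 2 + p.1 ^ 2)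
          + 4 * c * p.2 * (p.2 ^ 2 + p.1 ^ 2) * Gfun w (Dop w (Dop w P)) (p.2 ^ 2 + p.1 ^ 2) := by
      rw [hg2]
      exact (lap2R_swap (fun q => (c * q.1) * Gfun w P (q.1 ^ 2 + q.2 ^ 2)) p).trans
        (lap_aux w c P (p.2, p.1))
    rw [add_comm (p.2 ^ 2) (p.1 ^ 2)] at hlapg
    have hfp : f p = (c * p.1) * Gfun w P (p.1 ^ 2 + p.2 ^ 2) := by rw [hf']
    have hgp : g p = (c * p.2) * Gfun w P (p.1 ^ 2 + p.2 ^ 2) := by rw [hg']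
    constructor
    · rw [hlapf, hfp, hgp]
      simp only [Gfun, hQe, hRe]
      linear_combination
        (-2 * w * c * p.1 * Real.exp (-(w * (p.1 ^ 2 + p.2 ^ 2)) / 2)) * hode
        + (-(c * p.1 * Real.exp (-(w * (p.1 ^ 2 + p.2 ^ 2)) / 2)
            * P.eval (w * (p.1 ^ 2 + p.2 ^ 2)) * (p.1 ^ 2 + p.2 ^ 2) / 2)) * hw2
    · rw [hlapg, hfp, hgp]
      simp only [Gfun, hQe, hRe]
      linear_combination
        (-2 * w * c * p.2 * Real.exp (-(w * (p.1 ^ 2 + p.2 ^ 2)) / 2)) * hode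
        + (-(c * p.2 * Real.exp (-(w * (p.1 ^ 2 + p.2 ^ 2)) / 2)
            * P.eval (w * (p.1 ^ 2 + p.2 ^ 2)) * (p.1 ^ 2 + p.2 ^ 2) / 2)) * hw2
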